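/- Let Q ⊆ L be fields with L = Q[α] where α^n ∈ Q for some positive integer n, and set d = |L:Q|. Then d ≤ n, and if moreover α^d ∈ Q, then d divides n. -/

import Mathlib

/-- If `L = Q[α]` with `α ^ n ∈ Q` for some `n > 0`, and `d = [L : Q]`, then
`d ≤ n`, and if moreover `α ^ d ∈ Q` then `d ∣ n`. -/
theorem stmt1 (Q L : Type*) [Field Q] [Field L] [Algebra Q L]
    [FiniteDimensional Q L]
    (α : L) (n : ℕ) (hn : 0 < n)
    (hpow : α ^ n ∈ (algebraMap Q L).range)
    (hgen : Algebra.adjoin Q {α} = ⊤)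
    (d : ℕ) (hd : d = Module.finrank Q L) :
    d ≤ n ∧ (α ^ d ∈ (algebraMap Q L).range → d ∣ n) := by
  have hint : IsIntegral Q α := Algebra.IsIntegral.isIntegral α
  have htop : IntermediateField.adjoin Q {α} = ⊤ := by
    apply IntermediateField.toSubalgebra_injective
    rw [IntermediateField.adjoin_simple_toSubalgebra_of_isAlgebraic hint.isAlgebraic, hgen,
      IntermediateField.top_toSubalgebra]
  have hdeg : d = (minpoly Q α).natDegree := by
    rw [hd, ← IntermediateField.finrank_top', ← htop,
      IntermediateField.adjoin.finrank hint]
  -- key: if α^m ∈ Q with m > 0 then d ≤ m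
  have key : ∀ m : ℕ, 0 < m → α ^ m ∈ (algebraMap Q L).range → d ≤ m := by
    intro m hm ⟨c, hc⟩
    have hp : (Polynomial.X ^ m - Polynomial.C c : Polynomial Q) ≠ 0 :=
      (Polynomial.monic_X_pow_sub_C c hm.ne').ne_zero
    have haev : Polynomial.aeval α (Polynomial.X ^ m - Polynomial.C c) = 0 := by
      simp [hc]
    have := Polynomial.natDegree_le_of_dvd (minpoly.dvd Q α haev) hp
    rwa [Polynomial.natDegree_X_pow_sub_C, ← hdeg] at this
  have hdn : d ≤ n := key n hn hpow
  refine ⟨hdn, fun hαd => ?_⟩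
  rcases eq_or_ne α 0 with rfl | hα0
  · have hd1 : d = 1 :=
      le_antisymm (key 1 one_pos ⟨0, by simp⟩) (hd ▸ Module.finrank_pos)
    simp [hd1]
  · have hd0 : 0 < d := hd ▸ Module.finrank_pos
    obtain ⟨a, ha⟩ := hpow
    obtain ⟨b, hb⟩ := hαd
    have hb0 : b ≠ 0 := by
      rintro rfl
      exact hα0 (pow_eq_zero_iff hd0.ne' |>.mp (by simp [← hb]))
    -- α ^ (n % d) ∈ Q
    have hrem : α ^ (n % d) ∈ (algebraMap Q L).range := by
      refine ⟨a / b ^ (n / d), ?_⟩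
      have h1 : α ^ (d * (n / d)) * α ^ (n % d) = α ^ n := by
        rw [← pow_add, Nat.div_add_mod]
      have h2 : α ^ (d * (n / d)) = algebraMap Q L (b ^ (n / d)) := by
        rw [pow_mul, map_pow, hb]
      have hbL : algebraMap Q L b ≠ 0 := by
        simpa using (map_ne_zero (algebraMap Q L)).mpr hb0
      field_simp
      rw [map_div₀, map_pow, div_eq_iff (pow_ne_zero _ hbL), ha, ← h1, h2, map_pow, mul_comm]
    rcases Nat.eq_zero_or_pos (n % d) with h | h
    · exact Nat.dvd_of_mod_eq_zero h
    · exact absurd (key _ h hrem) (by have := Nat.mod_lt n hd0; omega)
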